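/- arXiv:2511.23282 — 3 statements merged into one kernel-verified Lean document; each statement's English description precedes it below -/
import Mathlib

section
/- Let Z be a nonempty finite type, E a real normed vector space, g : Z → E, and let p, q : Z → ℝ satisfy p z ≥ 0 and q z > 0 for all z, with ∑_z p z = 1 and ∑_z q z = 1. Then ‖∑_z (p z − q z) • g z‖ ≤ (max_z ‖g z‖) · √(2 · ∑_z p z · log(p z / q z)), where the term p z · log(p z / q z) is interpreted as 0 when p z = 0. -/
open Real

/-- G x = (x+1) log x - 2(x-1), monotone on (0,∞). -/
private lemma aux_G_deriv {x : ℝ} (hx : 0 < x) :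
    HasDerivAt (fun y : ℝ => (y + 1) * Real.log y - 2 * (y - 1))
      (Real.log x + 1 / x - 1) x := by
  have h1 : HasDerivAt (fun y : ℝ => (y + 1) * Real.log y)
      (1 * Real.log x + (x + 1) * x⁻¹) x :=
    (hasDerivAt_id x).add_const 1 |>.mul (Real.hasDerivAt_log hx.ne')
  have h2 : HasDerivAt (fun y : ℝ => 2 * (y - 1)) 2 x := by
    simpa using ((hasDerivAt_id x).sub_const 1).const_mul 2
  refine (h1.sub h2).congr_deriv ?_
  have hx0 : x ≠ 0 := hx.ne'
  field_simp
  ring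

private lemma aux_G_mono :
    MonotoneOn (fun y : ℝ => (y + 1) * Real.log y - 2 * (y - 1)) (Set.Ioi 0) := by
  have hderiv : ∀ x ∈ Set.Ioi (0:ℝ),
      deriv (fun y : ℝ => (y + 1) * Real.log y - 2 * (y - 1)) x = Real.log x + 1 / x - 1 :=
    fun x hx => (aux_G_deriv hx).deriv
  apply monotoneOn_of_deriv_nonneg (convex_Ioi 0)
  · exact fun x hx => ((aux_G_deriv hx).continuousAt).continuousWithinAt
  · intro x hx
    rw [interior_Ioi] at hx
    exact ((aux_G_deriv hx).differentiableAt).differentiableWithinAt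
  · intro x hx
    rw [interior_Ioi] at hx
    rw [(aux_G_deriv hx).deriv]
    have := Real.one_sub_inv_le_log_of_pos hx
    rw [inv_eq_one_div] at this
    linarith

private lemma aux_G_nonneg {x : ℝ} (hx : 1 ≤ x) :
    0 ≤ (x + 1) * Real.log x - 2 * (x - 1) := by
  have := aux_G_mono (Set.mem_Ioi.2 one_pos) (Set.mem_Ioi.2 (lt_of_lt_of_le one_pos hx)) hx
  simpa using this

private lemma aux_G_nonpos {x : ℝ} (hx0 : 0 < x) (hx : x ≤ 1) :
    (x + 1) * Real.log x - 2 * (x - 1) ≤ 0 := by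
  have := aux_G_mono (Set.mem_Ioi.2 hx0) (Set.mem_Ioi.2 one_pos) hx
  simpa using this

private lemma aux_F_deriv {x : ℝ} (hx : 0 < x) :
    HasDerivAt (fun y : ℝ => 2 * (y + 2) * (y * Real.log y - y + 1) - 3 * (y - 1) ^ 2)
      (4 * ((x + 1) * Real.log x - 2 * (x - 1))) x := by
  have hlog : HasDerivAt (fun y : ℝ => y * Real.log y - y + 1)
      (Real.log x) x := by
    have h1 : HasDerivAt (fun y : ℝ => y * Real.log y)
        (1 * Real.log x + x * x⁻¹) x :=
      (hasDerivAt_id x).mul (Real.hasDerivAt_log hx.ne')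
    have : HasDerivAt (fun y : ℝ => y * Real.log y - y + 1)
        (1 * Real.log x + x * x⁻¹ - 1) x := (h1.sub (hasDerivAt_id x)).add_const 1
    convert this using 1
    field_simp
    ring
  have h1 : HasDerivAt (fun y : ℝ => 2 * (y + 2) * (y * Real.log y - y + 1))
      (2 * (x * Real.log x - x + 1) + 2 * (x + 2) * Real.log x) x := by
    have ha : HasDerivAt (fun y : ℝ => 2 * (y + 2)) 2 x := by
      simpa using ((hasDerivAt_id x).add_const 2).const_mul 2
    have := ha.mul hlog
    exact this
  have h2 : HasDerivAt (fun y : ℝ => 3 * (y - 1) ^ 2) (3 * (2 * (x - 1))) x := by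
    have : HasDerivAt (fun y : ℝ => (y - 1) ^ 2) (2 * (x - 1)) x := by
      simpa using ((hasDerivAt_id x).sub_const 1).fun_pow 2
    simpa using this.const_mul 3
  refine (h1.sub h2).congr_deriv ?_
  ring

/-- Key pointwise inequality: 3(x-1)² ≤ 2(x+2)(x log x - x + 1) for x > 0. -/
private lemma aux_key {x : ℝ} (hx : 0 < x) :
    3 * (x - 1) ^ 2 ≤ 2 * (x + 2) * (x * Real.log x - x + 1) := by
  set F : ℝ → ℝ := fun y => 2 * (y + 2) * (y * Real.log y - y + 1) - 3 * (y - 1) ^ 2 with hF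
  have hF1 : F 1 = 0 := by simp [hF]
  have hsub : ∀ s : Set ℝ, s ⊆ Set.Ioi (0:ℝ) →
      ContinuousOn F s ∧ DifferentiableOn ℝ F s := by
    intro s hs
    constructor
    · exact fun y hy => ((aux_F_deriv (hs hy)).continuousAt).continuousWithinAt
    · exact fun y hy => ((aux_F_deriv (hs hy)).differentiableAt).differentiableWithinAt
  have key : 0 ≤ F x := by
    rcases le_total 1 x with h1 | h1
    · -- F monotone on [1, x]
      have hmono : MonotoneOn F (Set.Icc 1 x) := by
        apply monotoneOn_of_deriv_nonneg (convex_Icc 1 x)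
        · exact (hsub _ (fun y hy => lt_of_lt_of_le one_pos hy.1)).1
        · refine (hsub _ ?_).2
          intro y hy
          rw [interior_Icc] at hy
          exact lt_of_lt_of_le one_pos hy.1.le
        · intro y hy
          rw [interior_Icc] at hy
          rw [(aux_F_deriv (lt_of_lt_of_le one_pos hy.1.le)).deriv]
          have := aux_G_nonneg hy.1.le
          linarith
      have := hmono (Set.left_mem_Icc.2 h1) (Set.right_mem_Icc.2 h1) h1
      rwa [hF1] at this
    · -- F antitone on [x, 1]
      have hanti : AntitoneOn F (Set.Icc x 1) := by
        apply antitoneOn_of_deriv_nonpos (convex_Icc x 1)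
        · exact (hsub _ (fun y hy => lt_of_lt_of_le hx hy.1)).1
        · refine (hsub _ ?_).2
          intro y hy
          rw [interior_Icc] at hy
          exact lt_of_lt_of_le hx hy.1.le
        · intro y hy
          rw [interior_Icc] at hy
          rw [(aux_F_deriv (lt_of_lt_of_le hx hy.1.le)).deriv]
          have := aux_G_nonpos (lt_of_lt_of_le hx hy.1.le) hy.2.le
          linarith
      have := hanti (Set.left_mem_Icc.2 h1) (Set.right_mem_Icc.2 h1) h1
      rwa [hF1] at this
  simp only [hF] at key
  linarith

/-- Pointwise: 3(p-q)² ≤ (2p+4q)(p log(p/q) - p + q) for p ≥ 0, q > 0. -/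
private lemma aux_pt {p q : ℝ} (hp : 0 ≤ p) (hq : 0 < q) :
    3 * (p - q) ^ 2 ≤ (2 * p + 4 * q) * (p * Real.log (p / q) - p + q) := by
  rcases eq_or_lt_of_le hp with h0 | h0
  · rw [← h0]
    simp only [zero_sub, zero_mul, zero_div]
    nlinarith [sq_nonneg q, hq]
  · have hx : 0 < p / q := div_pos h0 hq
    have key := aux_key hx
    have hlog : Real.log (p / q) = Real.log (p / q) := rfl
    have hq2 : (0:ℝ) < q ^ 2 := pow_pos hq 2
    have expand : 2 * (p / q + 2) * (p / q * Real.log (p / q) - p / q + 1) * q ^ 2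
        = (2 * p + 4 * q) * (p * Real.log (p / q) - p + q) := by
      field_simp
      ring
    have expand2 : 3 * (p / q - 1) ^ 2 * q ^ 2 = 3 * (p - q) ^ 2 := by
      field_simp
    nlinarith [mul_le_mul_of_nonneg_right key hq2.le]

/-- Finite Pinsker inequality. -/
private lemma aux_pinsker {Z : Type*} [Fintype Z] (p q : Z → ℝ)
    (hp : ∀ z, 0 ≤ p z) (hq : ∀ z, 0 < q z)
    (hps : ∑ z, p z = 1) (hqs : ∑ z, q z = 1) :
    (∑ z, |p z - q z|) ^ 2 ≤ 2 * ∑ z, p z * Real.log (p z / q z) := by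
  set w : Z → ℝ := fun z => 2 * p z + 4 * q z with hw
  have hwpos : ∀ z, 0 < w z := fun z => by
    have := hq z; have := hp z; simp only [hw]; linarith
  -- Cauchy–Schwarz
  have cs := Finset.sum_mul_sq_le_sq_mul_sq Finset.univ
    (fun z => |p z - q z| / Real.sqrt (w z)) (fun z => Real.sqrt (w z))
  have h1 : ∀ z, |p z - q z| / Real.sqrt (w z) * Real.sqrt (w z) = |p z - q z| := by
    intro z
    rw [div_mul_cancel₀]
    exact (Real.sqrt_pos.2 (hwpos z)).ne'
  have h2 : ∀ z, (|p z - q z| / Real.sqrt (w z)) ^ 2 = (p z - q z) ^ 2 / w z := by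
    intro z
    rw [div_pow, Real.sq_sqrt (hwpos z).le, sq_abs]
  have h3 : ∀ z, (Real.sqrt (w z)) ^ 2 = w z := fun z => Real.sq_sqrt (hwpos z).le
  simp only [h1, h2, h3] at cs
  have hws : ∑ z, w z = 6 := by
    simp only [hw]
    rw [Finset.sum_add_distrib, ← Finset.mul_sum, ← Finset.mul_sum, hps, hqs]
    norm_num
  rw [hws] at cs
  -- bound ∑ (p-q)²/w by KL/3
  have hKLsum : ∑ z, (p z * Real.log (p z / q z) - p z + q z)
      = ∑ z, p z * Real.log (p z / q z) := by
    rw [Finset.sum_add_distrib, Finset.sum_sub_distrib, hps, hqs]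
    ring
  have bound : ∑ z, (p z - q z) ^ 2 / w z ≤ (∑ z, p z * Real.log (p z / q z)) / 3 := by
    rw [← hKLsum, Finset.sum_div]
    apply Finset.sum_le_sum
    intro z _
    have := aux_pt (hp z) (hq z)
    rw [div_le_div_iff₀ (hwpos z) (by norm_num : (0:ℝ) < 3)]
    simp only [hw]
    nlinarith
  calc (∑ z, |p z - q z|) ^ 2 ≤ (∑ z, (p z - q z) ^ 2 / w z) * 6 := cs
    _ ≤ (∑ z, p z * Real.log (p z / q z)) / 3 * 6 := by linarith
    _ = 2 * ∑ z, p z * Real.log (p z / q z) := by ring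

/-- Corrected form of step (37)–(A-1) in the proof of Lemma 1: the norm of the
difference of probability-weighted gradient aggregates is bounded by the largest
per-sample gradient norm times √(2·D_KL(p‖q)). -/
theorem stmt_3 {Z : Type*} [Fintype Z] [Nonempty Z]
    {E : Type*} [NormedAddCommGroup E] [NormedSpace ℝ E]
    (g : Z → E) (p q : Z → ℝ) (hp : ∀ z, 0 ≤ p z) (hq : ∀ z, 0 < q z)
    (hps : ∑ z, p z = 1) (hqs : ∑ z, q z = 1) :
    ‖∑ z, (p z - q z) • g z‖ ≤
      (Finset.univ.sup' Finset.univ_nonempty fun z => ‖g z‖) *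
        Real.sqrt (2 * ∑ z, p z * Real.log (p z / q z)) := by
  set M := Finset.univ.sup' Finset.univ_nonempty fun z => ‖g z‖ with hM
  have hMz : ∀ z, ‖g z‖ ≤ M := fun z => by
    rw [hM]; exact Finset.le_sup' (fun z => ‖g z‖) (Finset.mem_univ z)
  have hMnn : 0 ≤ M := by
    obtain ⟨z⟩ := ‹Nonempty Z›
    exact le_trans (norm_nonneg (g z)) (hMz z)
  have pinsker := aux_pinsker p q hp hq hps hqs
  have hKLnn : 0 ≤ 2 * ∑ z, p z * Real.log (p z / q z) :=
    le_trans (sq_nonneg _) pinsker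
  have habs : ∑ z, |p z - q z| ≤ Real.sqrt (2 * ∑ z, p z * Real.log (p z / q z)) := by
    rw [show (∑ z, |p z - q z|) = Real.sqrt ((∑ z, |p z - q z|) ^ 2) from
      (Real.sqrt_sq (Finset.sum_nonneg fun z _ => abs_nonneg _)).symm]
    exact Real.sqrt_le_sqrt pinsker
  calc ‖∑ z, (p z - q z) • g z‖ ≤ ∑ z, ‖(p z - q z) • g z‖ := norm_sum_le _ _
    _ = ∑ z, |p z - q z| * ‖g z‖ := by simp [norm_smul]
    _ ≤ ∑ z, |p z - q z| * M := Finset.sum_le_sum fun z _ =>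
        mul_le_mul_of_nonneg_left (hMz z) (abs_nonneg _)
    _ = M * ∑ z, |p z - q z| := by rw [← Finset.sum_mul]; ring
    _ ≤ M * Real.sqrt (2 * ∑ z, p z * Real.log (p z / q z)) :=
        mul_le_mul_of_nonneg_left habs hMnn
end

section
/- Let (Ω, μ) be a probability space, E a real Hilbert space, and G : Ω → E a Bochner integrable function such that ω ↦ ‖G ω‖² is integrable. Let u = ∫ G dμ, let v ∈ E, and let η ∈ ℝ and c ≥ 0 be reals with ‖v − u‖ ≤ c·‖u‖. Then ∫ η·⟪G ω, v − u⟫ dμ(ω) ≤ (1/2)·(η² + c²)·∫ ‖G ω‖² dμ(ω). -/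
open MeasureTheory

/-- Precise measure-theoretic form of Proposition 1: the per-round increase of
the generalization gap is bounded by (1/2)(η² + c²)·E‖G‖². -/
theorem stmt_7 {Ω : Type*} [MeasurableSpace Ω] (μ : Measure Ω)
    [IsProbabilityMeasure μ]
    {E : Type*} [NormedAddCommGroup E] [InnerProductSpace ℝ E] [CompleteSpace E]
    (G : Ω → E) (hG : Integrable G μ)
    (hG2 : Integrable (fun ω => ‖G ω‖^2) μ)
    (v : E) (η c : ℝ) (hc : 0 ≤ c)
    (h : ‖v - ∫ ω, G ω ∂μ‖ ≤ c * ‖∫ ω, G ω ∂μ‖) :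
    ∫ ω, η * (inner ℝ (G ω) (v - ∫ ω', G ω' ∂μ) : ℝ) ∂μ ≤
      (1/2) * (η^2 + c^2) * ∫ ω, ‖G ω‖^2 ∂μ := by
  set u : E := ∫ ω, G ω ∂μ with hu
  set m : ℝ := ∫ ω, ‖G ω‖ ∂μ with hm
  set I : ℝ := ∫ ω, ‖G ω‖^2 ∂μ with hI
  have hGn : Integrable (fun ω => ‖G ω‖) μ := hG.norm
  -- Step 1: compute the integral
  have step1 : ∫ ω, η * (inner ℝ (G ω) (v - u) : ℝ) ∂μ = η * (inner ℝ u (v - u) : ℝ) := by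
    rw [integral_const_mul]
    congr 1
    have : (fun ω => (inner ℝ (G ω) (v - u) : ℝ)) = fun ω => (inner ℝ (v - u) (G ω) : ℝ) :=
      funext fun ω => real_inner_comm _ _
    rw [this, integral_inner hG, real_inner_comm]
  rw [step1]
  -- Step 2: m^2 ≤ I (variance nonneg)
  have hvar : 0 ≤ ∫ ω, (‖G ω‖ - m)^2 ∂μ :=
    integral_nonneg fun ω => sq_nonneg _
  have hexp : ∫ ω, (‖G ω‖ - m)^2 ∂μ = I - m^2 := by
    have : (fun ω => (‖G ω‖ - m)^2)
        = fun ω => ‖G ω‖^2 - (2*m) * ‖G ω‖ + m^2 := by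
      funext ω; ring
    have ha : Integrable (fun ω => ‖G ω‖^2 - 2*m*‖G ω‖) μ := hG2.sub (hGn.const_mul (2*m))
    rw [this, integral_add ha (integrable_const _),
      integral_sub hG2 (hGn.const_mul (2*m)), integral_const_mul, integral_const]
    simp [← hm, ← hI]
    ring
  have hmI : m^2 ≤ I := by nlinarith [hvar, hexp]
  have huI : ‖u‖^2 ≤ I := by
    have h1 : ‖u‖ ≤ m := norm_integral_le_integral_norm _
    nlinarith [norm_nonneg u]
  have hI0 : 0 ≤ I := integral_nonneg fun ω => sq_nonneg _
  -- Step 3: bound the inner product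
  have h2 : η * (inner ℝ u (v - u) : ℝ) ≤ |η| * (c * ‖u‖^2) := by
    calc η * (inner ℝ u (v - u) : ℝ) ≤ |η * (inner ℝ u (v - u) : ℝ)| := le_abs_self _
      _ = |η| * |(inner ℝ u (v - u) : ℝ)| := abs_mul _ _
      _ ≤ |η| * (‖u‖ * ‖v - u‖) := by
          gcongr; exact abs_real_inner_le_norm _ _
      _ ≤ |η| * (c * ‖u‖^2) := by
          have : ‖u‖ * ‖v - u‖ ≤ c * ‖u‖^2 := by
            nlinarith [norm_nonneg u, norm_nonneg (v - u)]
          gcongr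
  have h3 : |η| * c ≤ (1/2) * (η^2 + c^2) := by
    nlinarith [sq_abs η, sq_nonneg (|η| - c)]
  calc η * (inner ℝ u (v - u) : ℝ) ≤ |η| * (c * ‖u‖^2) := h2
    _ = (|η| * c) * ‖u‖^2 := by ring
    _ ≤ ((1/2) * (η^2 + c^2)) * I := by
        have hηc : 0 ≤ |η| * c := mul_nonneg (abs_nonneg _) hc
        exact mul_le_mul h3 huI (sq_nonneg _) (by positivity)
    _ = (1/2) * (η^2 + c^2) * I := by ring
end

section
/- Let E be a real inner product space, f : E → ℝ, and f′ : E → E such that f has gradient f′ x at every point x (HasGradientAt f (f′ x) x), f′ is Lipschitz with constant L > 0, and f x ≥ f⋆ for all x and some real f⋆. Let η > 0 satisfy η·L ≤ 1/2, and let ω, ω̃ : ℕ → E be sequences with ω (s+1) = ω s − η • f′ (ω̃ s) for all s. Then for every natural number S, (1/(S+1))·∑_{s=0}^{S} ‖f′ (ω̃ s)‖² ≤ 4·(f (ω 0) − f⋆)/(η·(S+1)) + (2·L²/(S+1))·∑_{s=0}^{S} ‖ω s − ω̃ s‖². -/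
open InnerProductSpace

lemma descent_lemma {E : Type*} [NormedAddCommGroup E] [InnerProductSpace ℝ E]
    [CompleteSpace E]
    (f : E → ℝ) (f' : E → E) (L : ℝ) (hL : 0 < L)
    (hgrad : ∀ x, HasGradientAt f (f' x) x)
    (hlip : LipschitzWith (Real.toNNReal L) f')
    (x v : E) :
    f (x + v) ≤ f x + ⟪f' x, v⟫_ℝ + L/2 * ‖v‖^2 := by
  set h : ℝ → ℝ := fun t => f (x + t • v) - t * ⟪f' x, v⟫_ℝ - t^2 * (L/2) * ‖v‖^2 with hh
  have hd : ∀ t : ℝ, HasDerivAt h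
      (⟪f' (x + t • v), v⟫_ℝ - ⟪f' x, v⟫_ℝ - t * L * ‖v‖^2) t := by
    intro t
    have hline : HasDerivAt (fun t : ℝ => x + t • v) v t := by
      simpa using ((hasDerivAt_id t).smul_const v).const_add x
    have h1 : HasDerivAt (fun t : ℝ => f (x + t • v)) (⟪f' (x + t • v), v⟫_ℝ) t := by
      have := ((hgrad (x + t • v)).hasFDerivAt).comp_hasDerivAt t hline
      simp at this
      exact this
    have h2 : HasDerivAt (fun t : ℝ => t * ⟪f' x, v⟫_ℝ) (⟪f' x, v⟫_ℝ) t := by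
      simpa using (hasDerivAt_id t).mul_const (⟪f' x, v⟫_ℝ)
    have h3 : HasDerivAt (fun t : ℝ => t^2 * (L/2) * ‖v‖^2) (t * L * ‖v‖^2) t := by
      have := ((hasDerivAt_pow 2 t).mul_const (L/2)).mul_const (‖v‖^2)
      exact this.congr_deriv (by rw [show (2:ℕ) - 1 = 1 from rfl]; push_cast; ring)
    have := (h1.sub h2).sub h3
    exact this
  have hmono : h 1 ≤ h 0 := by
    have : AntitoneOn h (Set.Icc (0:ℝ) 1) := by
      apply antitoneOn_of_deriv_nonpos (convex_Icc 0 1)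
      · exact fun t _ => ((hd t).continuousAt).continuousWithinAt
      · exact fun t _ => (hd t).differentiableAt.differentiableWithinAt
      · intro t ht
        rw [interior_Icc] at ht
        rw [(hd t).deriv]
        have hlipb : ‖f' (x + t • v) - f' x‖ ≤ L * (t * ‖v‖) := by
          have := hlip.dist_le_mul (x + t • v) x
          rw [dist_eq_norm] at this
          have h0 : (0:ℝ) ≤ L := hL.le
          calc ‖f' (x + t • v) - f' x‖ ≤ L * ‖x + t • v - x‖ := by
                simpa [Real.coe_toNNReal L h0] using this
            _ = L * (t * ‖v‖) := by
                rw [add_sub_cancel_left, norm_smul, Real.norm_eq_abs,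
                  abs_of_nonneg ht.1.le]
      -- ⟪f'(x+tv) - f'x, v⟫ ≤ L t ‖v‖²
        have hinner : ⟪f' (x + t • v) - f' x, v⟫_ℝ ≤ t * L * ‖v‖^2 := by
          calc ⟪f' (x + t • v) - f' x, v⟫_ℝ ≤ ‖f' (x + t • v) - f' x‖ * ‖v‖ :=
                real_inner_le_norm _ _
            _ ≤ (L * (t * ‖v‖)) * ‖v‖ := by
                apply mul_le_mul_of_nonneg_right hlipb (norm_nonneg v)
            _ = t * L * ‖v‖^2 := by ring
        rw [inner_sub_left] at hinner
        linarith
    simpa using this (Set.left_mem_Icc.2 zero_le_one) (Set.right_mem_Icc.2 zero_le_one)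
      zero_le_one
  simp only [hh, one_smul, zero_smul, add_zero, one_pow, one_mul, zero_mul,
    zero_pow, sub_zero] at hmono
  linarith [hmono]

/-- Deterministic full-gradient analogue of Theorem 1 for federated edge
learning with model pruning. -/
theorem stmt_15 {E : Type*} [NormedAddCommGroup E] [InnerProductSpace ℝ E]
    [CompleteSpace E]
    (f : E → ℝ) (f' : E → E) (L : ℝ) (hL : 0 < L)
    (hgrad : ∀ x, HasGradientAt f (f' x) x)
    (hlip : LipschitzWith (Real.toNNReal L) f')
    (fstar : ℝ) (hbound : ∀ x, fstar ≤ f x)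
    (η : ℝ) (hη : 0 < η) (hηL : η * L ≤ 1/2)
    (ω ωt : ℕ → E) (hupd : ∀ s, ω (s+1) = ω s - η • f' (ωt s)) :
    ∀ S : ℕ,
      (1/((S:ℝ)+1)) * ∑ s ∈ Finset.range (S+1), ‖f' (ωt s)‖^2 ≤
        4 * (f (ω 0) - fstar) / (η * ((S:ℝ)+1)) +
          (2 * L^2 / ((S:ℝ)+1)) * ∑ s ∈ Finset.range (S+1), ‖ω s - ωt s‖^2 := by
  intro S
  -- per-step inequality
  have step : ∀ s : ℕ, (η/4) * ‖f' (ωt s)‖^2 ≤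
      (f (ω s) - f (ω (s+1))) + (η * L^2 / 2) * ‖ω s - ωt s‖^2 := by
    intro s
    set g := f' (ωt s) with hg
    set a := ‖g‖
    set b := ‖ω s - ωt s‖
    have hdesc := descent_lemma f f' L hL hgrad hlip (ω s) (-(η • g))
    have heq : ω s + -(η • g) = ω (s+1) := by rw [hupd s]; abel
    rw [heq] at hdesc
    have hin : ⟪f' (ω s), -(η • g)⟫_ℝ = -(η * ⟪f' (ω s), g⟫_ℝ) := by
      rw [inner_neg_right, real_inner_smul_right]
    have hnorm : ‖-(η • g)‖^2 = η^2 * a^2 := by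
      rw [norm_neg, norm_smul, Real.norm_eq_abs, mul_pow, sq_abs]
    rw [hin, hnorm] at hdesc
    have hsplit : ⟪f' (ω s), g⟫_ℝ = a^2 + ⟪f' (ω s) - g, g⟫_ℝ := by
      rw [inner_sub_left, real_inner_self_eq_norm_sq]; ring
    have hc : -(L * b * a) ≤ ⟪f' (ω s) - g, g⟫_ℝ := by
      have h1 : |⟪f' (ω s) - g, g⟫_ℝ| ≤ ‖f' (ω s) - g‖ * ‖g‖ := abs_real_inner_le_norm _ _
      have h2 : ‖f' (ω s) - g‖ ≤ L * b := by
        have := hlip.dist_le_mul (ω s) (ωt s)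
        rw [dist_eq_norm] at this
        simpa [hg, Real.coe_toNNReal L hL.le, dist_eq_norm] using this
      have h3 : ‖f' (ω s) - g‖ * ‖g‖ ≤ L * b * a :=
        mul_le_mul_of_nonneg_right h2 (norm_nonneg g)
      have := (abs_le.mp h1).1
      linarith
    rw [hsplit] at hdesc
    nlinarith [sq_nonneg (L * b - a), sq_nonneg a, mul_pos hη hL,
      mul_le_mul_of_nonneg_left hηL (mul_nonneg hη.le (sq_nonneg a)),
      mul_le_mul_of_nonneg_right hc hη.le]
  -- sum the per-step inequalities
  set A := ∑ s ∈ Finset.range (S+1), ‖f' (ωt s)‖^2 with hA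
  set D := ∑ s ∈ Finset.range (S+1), ‖ω s - ωt s‖^2 with hD
  have hsum : (η/4) * A ≤ (f (ω 0) - fstar) + (η * L^2 / 2) * D := by
    have h1 : ∑ s ∈ Finset.range (S+1), ((η/4) * ‖f' (ωt s)‖^2) ≤
        ∑ s ∈ Finset.range (S+1),
          ((f (ω s) - f (ω (s+1))) + (η * L^2 / 2) * ‖ω s - ωt s‖^2) :=
      Finset.sum_le_sum fun s _ => step s
    rw [Finset.sum_add_distrib, Finset.sum_range_sub' (fun s => f (ω s)),
      ← Finset.mul_sum, ← Finset.mul_sum] at h1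
    have := hbound (ω (S+1))
    linarith
  have hN : (0:ℝ) < (S:ℝ) + 1 := by positivity
  have hDnn : 0 ≤ D := Finset.sum_nonneg fun s _ => sq_nonneg _
  have key : η * A ≤ 4 * (f (ω 0) - fstar) + 2 * η * L^2 * D := by linarith
  have e1 : (1/((S:ℝ)+1)) * A = (η*A)/(η*((S:ℝ)+1)) := by
    field_simp
  have e2 : 4 * (f (ω 0) - fstar) / (η * ((S:ℝ)+1)) + (2 * L^2 / ((S:ℝ)+1)) * D
      = (4 * (f (ω 0) - fstar) + 2*η*L^2*D)/(η*((S:ℝ)+1)) := by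
    field_simp
  rw [e1, e2]
  apply div_le_div_of_nonneg_right ?_ ?_ |>.trans_eq rfl
  · exact key
  · positivity
end
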